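/- Let ν = p·ν₁ + (1-p)·ν₀ be a mixture of probability measures on ℝ with p ∈ (0,1] and continuous CDF F, and let G'(y) = max{0, (F(y)-(1-p))/p}. Then G' is a CDF and G'(y) ≤ F₁(y) for all y, where F₁ is the CDF of ν₁; consequently, if ν₁ has finite mean, ∫ y dG'(y) ≥ ∫ y dF₁(y). -/

import Mathlib

open MeasureTheory Filter Topology

/-- The CDF of a measure on `ℝ`. -/
noncomputable def cdfOf (ν : Measure ℝ) (y : ℝ) : ℝ := (ν (Set.Iic y)).toReal

/-- Layer-cake for the positive part of the identity. -/
lemma layerPos (τ : Measure ℝ) :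
    ∫⁻ a, ENNReal.ofReal a ∂τ = ∫⁻ t in Set.Ioi (0:ℝ), τ (Set.Ioi t) := by
  have h1 : ∫⁻ a, ENNReal.ofReal a ∂τ = ∫⁻ a, ENNReal.ofReal (max a 0) ∂τ := by
    refine lintegral_congr fun a => ?_
    rcases le_total a 0 with h | h
    · rw [max_eq_right h, ENNReal.ofReal_zero, ENNReal.ofReal_eq_zero.2 h]
    · rw [max_eq_left h]
  rw [h1, lintegral_eq_lintegral_meas_lt τ (ae_of_all _ fun a => le_max_right a 0)
      ((measurable_id.max measurable_const).aemeasurable)]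
  refine setLIntegral_congr_fun measurableSet_Ioi (fun t ht => ?_)
  congr 1
  ext a
  simp only [Set.mem_setOf_eq, Set.mem_Ioi, lt_max_iff]
  exact ⟨fun h => h.elim id (fun h' => absurd ht (by simp [Set.mem_Ioi]; linarith)), Or.inl⟩

/-- Layer-cake for the negative part of the identity. -/
lemma layerNeg (τ : Measure ℝ) :
    ∫⁻ a, ENNReal.ofReal (-a) ∂τ = ∫⁻ t in Set.Ioi (0:ℝ), τ (Set.Iio (-t)) := by
  have h1 : ∫⁻ a, ENNReal.ofReal (-a) ∂τ = ∫⁻ a, ENNReal.ofReal (max (-a) 0) ∂τ := by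
    refine lintegral_congr fun a => ?_
    rcases le_total (-a) 0 with h | h
    · rw [max_eq_right h, ENNReal.ofReal_zero, ENNReal.ofReal_eq_zero.2 h]
    · rw [max_eq_left h]
  rw [h1, lintegral_eq_lintegral_meas_lt τ (ae_of_all _ fun a => le_max_right (-a) 0)
      ((measurable_id.neg.max measurable_const).aemeasurable)]
  refine setLIntegral_congr_fun measurableSet_Ioi (fun t ht => ?_)
  congr 1
  ext a
  simp only [Set.mem_setOf_eq, Set.mem_Iio, lt_max_iff]
  constructor
  · rintro (h | h)
    · linarith
    · exact absurd ht (by simp [Set.mem_Ioi]; linarith)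
  · intro h; exact Or.inl (by linarith)

/-- Comparison of means via comparison of CDFs, for finite measures of equal mass. -/
lemma meanCompare (μ σ : Measure ℝ) [IsFiniteMeasure μ] [IsFiniteMeasure σ]
    (hμ : Integrable id μ) (hσ : Integrable id σ)
    (hmass : μ Set.univ = σ Set.univ)
    (hIic : ∀ u, μ (Set.Iic u) ≤ σ (Set.Iic u))
    (hIio : ∀ u, μ (Set.Iio u) ≤ σ (Set.Iio u)) :
    ∫ y, y ∂σ ≤ ∫ y, y ∂μ := by
  have hIoi : ∀ u, σ (Set.Ioi u) ≤ μ (Set.Ioi u) := by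
    intro u
    rw [← Set.compl_Iic, measure_compl measurableSet_Iic (measure_ne_top _ _),
      measure_compl measurableSet_Iic (measure_ne_top _ _), ← hmass]
    exact tsub_le_tsub_left (hIic u) _
  have hfinP : ∀ (τ : Measure ℝ), Integrable id τ → ∫⁻ a, ENNReal.ofReal a ∂τ ≠ ⊤ := by
    intro τ hτ
    refine ne_of_lt (lt_of_le_of_lt (lintegral_mono fun a => ?_) hτ.2)
    exact le_trans (Real.ofReal_le_enorm a) le_rfl
  have hfinN : ∀ (τ : Measure ℝ), Integrable id τ → ∫⁻ a, ENNReal.ofReal (-a) ∂τ ≠ ⊤ := by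
    intro τ hτ
    refine ne_of_lt (lt_of_le_of_lt (lintegral_mono fun a => ?_) hτ.2)
    calc ENNReal.ofReal (-a) ≤ ENNReal.ofReal ‖a‖ :=
          ENNReal.ofReal_le_ofReal (by rw [Real.norm_eq_abs]; exact neg_le_abs a)
    _ = ‖a‖ₑ := by rw [Real.enorm_eq_ofReal_abs, Real.norm_eq_abs]
  have eμ := integral_eq_lintegral_pos_part_sub_lintegral_neg_part hμ
  have eσ := integral_eq_lintegral_pos_part_sub_lintegral_neg_part hσ
  simp only [id] at eμ eσ
  rw [eμ, eσ]
  have hP : ∫⁻ a, ENNReal.ofReal a ∂σ ≤ ∫⁻ a, ENNReal.ofReal a ∂μ := by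
    rw [layerPos, layerPos]
    exact lintegral_mono fun t => hIoi t
  have hN : ∫⁻ a, ENNReal.ofReal (-a) ∂μ ≤ ∫⁻ a, ENNReal.ofReal (-a) ∂σ := by
    rw [layerNeg, layerNeg]
    exact lintegral_mono fun t => hIio (-t)
  have h1 := ENNReal.toReal_mono (hfinP μ hμ) hP
  have h2 := ENNReal.toReal_mono (hfinN σ hσ) hN
  linarith

/-- Upper-tail trimming: `G'(y) = max{0, (F(y)-(1-p))/p}` is a CDF lying below the
component CDF `F₁` pointwise; consequently its mean — the mean of `ν` conditional on
exceeding its `(1-p)`-quantile, `(1/p)·∫_{{y | 1-p ≤ F y}} y dν` — is at least the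
component mean `∫ y dF₁`. -/
theorem stmt_16 (ν ν0 ν1 : Measure ℝ) [IsProbabilityMeasure ν] [IsProbabilityMeasure ν0]
    [IsProbabilityMeasure ν1] (p : ℝ) (hp : p ∈ Set.Ioc (0 : ℝ) 1)
    (hmix : ν = ENNReal.ofReal p • ν1 + ENNReal.ofReal (1 - p) • ν0)
    (hcont : Continuous (cdfOf ν))
    (hint : Integrable id ν) (hint1 : Integrable id ν1) :
    (Monotone fun y => max 0 ((cdfOf ν y - (1 - p)) / p)) ∧
    Continuous (fun y => max 0 ((cdfOf ν y - (1 - p)) / p)) ∧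
    Tendsto (fun y => max 0 ((cdfOf ν y - (1 - p)) / p)) atBot (𝓝 0) ∧
    Tendsto (fun y => max 0 ((cdfOf ν y - (1 - p)) / p)) atTop (𝓝 1) ∧
    (∀ y, max 0 ((cdfOf ν y - (1 - p)) / p) ≤ cdfOf ν1 y) ∧
    ∫ y, y ∂ν1 ≤ (1 / p) * ∫ y in {y : ℝ | 1 - p ≤ cdfOf ν y}, y ∂ν := by
  obtain ⟨hppos, hp1⟩ := hp
  have hp0 : (0:ℝ) ≤ p := hppos.le
  have h1p : (0:ℝ) ≤ 1 - p := by linarith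
  have hFmono : Monotone (cdfOf ν) := fun a b hab =>
    ENNReal.toReal_mono (measure_ne_top _ _) (measure_mono (Set.Iic_subset_Iic.2 hab))
  have hFeq : cdfOf ν = ⇑(ProbabilityTheory.cdf ν) :=
    funext fun x => (ProbabilityTheory.cdf_eq_real ν x).symm
  have hbot : Tendsto (cdfOf ν) atBot (𝓝 0) := hFeq ▸ ProbabilityTheory.tendsto_cdf_atBot ν
  have htop : Tendsto (cdfOf ν) atTop (𝓝 1) := hFeq ▸ ProbabilityTheory.tendsto_cdf_atTop ν
  have hmixs : ∀ s : Set ℝ, ν s = ENNReal.ofReal p * ν1 s + ENNReal.ofReal (1-p) * ν0 s := by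
    intro s; rw [hmix]; simp [Measure.smul_apply, smul_eq_mul]
  have hF1 : ∀ y, cdfOf ν y = p * cdfOf ν1 y + (1-p) * cdfOf ν0 y := by
    intro y
    unfold cdfOf
    rw [hmixs (Set.Iic y), ENNReal.toReal_add, ENNReal.toReal_mul, ENNReal.toReal_mul,
      ENNReal.toReal_ofReal hp0, ENNReal.toReal_ofReal h1p]
    · exact ENNReal.mul_ne_top ENNReal.ofReal_ne_top (measure_ne_top _ _)
    · exact ENNReal.mul_ne_top ENNReal.ofReal_ne_top (measure_ne_top _ _)
  have hatom : ∀ x : ℝ, ν {x} = 0 := by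
    intro x
    have hmc : (ProbabilityTheory.cdf ν).measure = ν := ProbabilityTheory.measure_cdf ν
    have hll : Function.leftLim (⇑(ProbabilityTheory.cdf ν)) x = ProbabilityTheory.cdf ν x := by
      refine leftLim_eq_of_tendsto ?_
      have hc : Continuous ⇑(ProbabilityTheory.cdf ν) := hFeq ▸ hcont
      exact (hc.tendsto x).mono_left nhdsWithin_le_nhds
    rw [← hmc, StieltjesFunction.measure_singleton, hll, sub_self, ENNReal.ofReal_zero]
  have hIicIio : ∀ x : ℝ, ν (Set.Iio x) = ν (Set.Iic x) := by
    intro x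
    refine le_antisymm (measure_mono Set.Iio_subset_Iic_self) ?_
    calc ν (Set.Iic x) = ν (Set.Iio x ∪ {x}) := by rw [Set.Iio_union_right]
    _ ≤ ν (Set.Iio x) + ν {x} := measure_union_le _ _
    _ = ν (Set.Iio x) := by rw [hatom, add_zero]
  -- the transformation `g`
  have hg : Continuous fun x : ℝ => max 0 ((x - (1-p))/p) :=
    continuous_const.max ((continuous_id.sub continuous_const).div_const p)
  refine ⟨?_, ?_, ?_, ?_, ?_, ?_⟩
  · -- monotone
    intro a b hab
    dsimp only
    have : (cdfOf ν a - (1-p))/p ≤ (cdfOf ν b - (1-p))/p := by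
      apply div_le_div_of_nonneg_right ?_ hp0
      · linarith [hFmono hab]
    exact max_le_max le_rfl this
  · exact continuous_const.max ((hcont.sub continuous_const).div_const p)
  · have h0 : max 0 ((0 - (1-p))/p) = 0 :=
      max_eq_left (div_nonpos_of_nonpos_of_nonneg (by linarith) hp0)
    have := (hg.tendsto 0).comp hbot
    simp only [Function.comp_def] at this
    rwa [h0] at this
  · have h1 : max 0 ((1 - (1-p))/p) = 1 := by
      rw [show (1:ℝ) - (1-p) = p by ring, div_self (ne_of_gt hppos)]
      exact max_eq_right zero_le_one
    have := (hg.tendsto 1).comp htop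
    simp only [Function.comp_def] at this
    rwa [h1] at this
  · intro y
    refine max_le ENNReal.toReal_nonneg ?_
    rw [div_le_iff₀ hppos]
    have h0 : cdfOf ν0 y ≤ 1 := by
      refine ENNReal.toReal_le_of_le_ofReal zero_le_one ?_
      simpa using prob_le_one
    have hFy := hF1 y
    nlinarith [mul_nonneg h1p (sub_nonneg.2 h0)]
  -- the main inequality
  · rcases eq_or_lt_of_le hp1 with hpe | hplt
    · -- p = 1
      subst hpe
      have hν : ν = ν1 := by simpa using hmix
      rw [hν]
      have hA : {y : ℝ | (1:ℝ) - 1 ≤ cdfOf ν1 y} = Set.univ :=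
        Set.eq_univ_of_forall fun y => by
          show (1:ℝ) - 1 ≤ cdfOf ν1 y
          rw [sub_self]; exact ENNReal.toReal_nonneg
      rw [hA, Measure.restrict_univ]
      norm_num
    · have h1p' : (0:ℝ) < 1 - p := by linarith
      set A : Set ℝ := {y | 1 - p ≤ cdfOf ν y} with hAdef
      have hAclosed : IsClosed A := isClosed_le continuous_const hcont
      have hAne : A.Nonempty := by
        obtain ⟨y, hy⟩ :=
          (htop.eventually (eventually_ge_nhds (show (1:ℝ) - p < 1 by linarith))).exists
        exact ⟨y, hy⟩
      have hAbdd : BddBelow A := by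
        obtain ⟨a, ha⟩ := (hbot.eventually (eventually_lt_nhds h1p')).exists
        refine ⟨a, fun x hx => ?_⟩
        by_contra hax
        push_neg at hax
        have h1 := hFmono hax.le
        have hx' : 1 - p ≤ cdfOf ν x := hx
        linarith
      set t := sInf A with htdef
      have htmem : t ∈ A := hAclosed.csInf_mem hAne hAbdd
      have htmem' : 1 - p ≤ cdfOf ν t := htmem
      have hAeq : A = Set.Ici t := by
        ext x
        constructor
        · exact fun hx => csInf_le hAbdd hx
        · intro hx
          show 1 - p ≤ cdfOf ν x
          exact le_trans htmem' (hFmono hx)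
      have hFt : cdfOf ν t = 1 - p := by
        refine le_antisymm ?_ htmem'
        have htd : Tendsto (cdfOf ν) (𝓝[<] t) (𝓝 (cdfOf ν t)) :=
          (hcont.tendsto t).mono_left nhdsWithin_le_nhds
        refine le_of_tendsto htd ?_
        filter_upwards [self_mem_nhdsWithin] with s hs
        by_contra h
        push_neg at h
        have hsA : s ∈ A := h.le
        have := csInf_le hAbdd hsA
        simp only [Set.mem_Iio] at hs
        linarith
      have hνIict : ν (Set.Iic t) = ENNReal.ofReal (1 - p) := by
        rw [← hFt]
        exact (ENNReal.ofReal_toReal (measure_ne_top _ _)).symm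
      have hνIiot : ν (Set.Iio t) = ENNReal.ofReal (1 - p) := (hIicIio t).trans hνIict
      have hone : (1:ENNReal) = ENNReal.ofReal p + ENNReal.ofReal (1-p) := by
        rw [← ENNReal.ofReal_add hp0 h1p]; norm_num
      have hmassA : ν A = ENNReal.ofReal p := by
        rw [hAeq, ← Set.compl_Iio, measure_compl measurableSet_Iio (measure_ne_top _ _),
          measure_univ, hνIiot, hone, ENNReal.add_sub_cancel_right ENNReal.ofReal_ne_top]
      haveI hσfin : IsFiniteMeasure (ENNReal.ofReal p • ν1) := by
        constructor
        simp [Measure.smul_apply, smul_eq_mul, ENNReal.mul_lt_top, ENNReal.ofReal_lt_top]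
      have hIicA : ∀ u, (ν.restrict A) (Set.Iic u) ≤ (ENNReal.ofReal p • ν1) (Set.Iic u) := by
        intro u
        rw [Measure.restrict_apply measurableSet_Iic, Measure.smul_apply, smul_eq_mul, hAeq]
        rcases lt_or_ge u t with hut | htu
        · have hemp : Set.Iic u ∩ Set.Ici t = ∅ := by
            ext x
            simp only [Set.mem_inter_iff, Set.mem_Iic, Set.mem_Ici, Set.mem_empty_iff_false,
              iff_false, not_and, not_le]
            intro h1; linarith
          simp [hemp]
        · have hset : Set.Iic u ∩ Set.Ici t = Set.Iic u \ Set.Iio t := by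
            ext x
            simp only [Set.mem_inter_iff, Set.mem_Iic, Set.mem_Ici, Set.mem_diff, Set.mem_Iio,
              not_lt]
          have hdiff : ν (Set.Iic u \ Set.Iio t) = ν (Set.Iic u) - ν (Set.Iio t) :=
            measure_diff (Set.Iio_subset_Iic_self.trans (Set.Iic_subset_Iic.2 htu))
              measurableSet_Iio.nullMeasurableSet (measure_ne_top _ _)
          rw [hset, hdiff, hνIiot, tsub_le_iff_right]
          calc ν (Set.Iic u)
              = ENNReal.ofReal p * ν1 (Set.Iic u) + ENNReal.ofReal (1-p) * ν0 (Set.Iic u) :=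
                hmixs _
          _ ≤ ENNReal.ofReal p * ν1 (Set.Iic u) + ENNReal.ofReal (1-p) * 1 := by
                gcongr; exact prob_le_one
          _ = ENNReal.ofReal p * ν1 (Set.Iic u) + ENNReal.ofReal (1-p) := by rw [mul_one]
      have hIioA : ∀ u, (ν.restrict A) (Set.Iio u) ≤ (ENNReal.ofReal p • ν1) (Set.Iio u) := by
        intro u
        rw [Measure.restrict_apply measurableSet_Iio, Measure.smul_apply, smul_eq_mul, hAeq]
        rcases le_or_gt u t with hut | htu
        · have hemp : Set.Iio u ∩ Set.Ici t = ∅ := by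
            ext x
            simp only [Set.mem_inter_iff, Set.mem_Iio, Set.mem_Ici, Set.mem_empty_iff_false,
              iff_false, not_and, not_le]
            intro h1; linarith
          simp [hemp]
        · have hset : Set.Iio u ∩ Set.Ici t = Set.Iio u \ Set.Iio t := by
            ext x
            simp only [Set.mem_inter_iff, Set.mem_Iio, Set.mem_Ici, Set.mem_diff, not_lt]
          have hdiff : ν (Set.Iio u \ Set.Iio t) = ν (Set.Iio u) - ν (Set.Iio t) :=
            measure_diff (Set.Iio_subset_Iio htu.le)
              measurableSet_Iio.nullMeasurableSet (measure_ne_top _ _)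
          rw [hset, hdiff, hνIiot, tsub_le_iff_right]
          calc ν (Set.Iio u)
              = ENNReal.ofReal p * ν1 (Set.Iio u) + ENNReal.ofReal (1-p) * ν0 (Set.Iio u) :=
                hmixs _
          _ ≤ ENNReal.ofReal p * ν1 (Set.Iio u) + ENNReal.ofReal (1-p) * 1 := by
                gcongr; exact prob_le_one
          _ = ENNReal.ofReal p * ν1 (Set.Iio u) + ENNReal.ofReal (1-p) := by rw [mul_one]
      have hmass : (ν.restrict A) Set.univ = (ENNReal.ofReal p • ν1) Set.univ := by
        simp [Measure.restrict_apply_univ, hmassA, Measure.smul_apply, smul_eq_mul]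
      have hcomp := meanCompare (ν.restrict A) (ENNReal.ofReal p • ν1)
        (hint.restrict) (hint1.smul_measure ENNReal.ofReal_ne_top) hmass hIicA hIioA
      rw [integral_smul_measure, ENNReal.toReal_ofReal hp0, smul_eq_mul] at hcomp
      calc ∫ y, y ∂ν1 = (1/p) * (p * ∫ y, y ∂ν1) := by field_simp
      _ ≤ (1/p) * ∫ y, y ∂(ν.restrict A) := by
            apply mul_le_mul_of_nonneg_left hcomp
            positivity
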